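/- Let G be a finite connected simple graph with at least two vertices such that meg(G) = |V(G)|, and let H be any finite connected simple graph with at least two vertices. Then meg(G □ H) = |V(G)|·|V(H)| and meg(G ⊠ H) = |V(G)|·|V(H)|; that is, the only MEG-set of either product is the whole vertex set. -/

import Mathlib

open SimpleGraph

/-- `S` is a monitoring edge-geodetic set (MEG-set) of `G`: for every edge `e` of `G`
there are `x, y ∈ S` whose distance in `G − e` differs from their distance in `G`
(including the case that they become disconnected in `G − e`). -/
def IsMEGSet {V : Type*} (G : SimpleGraph V) (S : Set V) : Prop :=
  ∀ e ∈ G.edgeSet, ∃ x ∈ S, ∃ y ∈ S,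
    ¬ (G.deleteEdges {e}).Reachable x y ∨ (G.deleteEdges {e}).dist x y ≠ G.dist x y

/-- The monitoring edge-geodetic number: the minimum cardinality of an MEG-set. -/
noncomputable def meg {V : Type*} [Fintype V] (G : SimpleGraph V) : ℕ :=
  sInf {n | ∃ S : Set V, IsMEGSet G S ∧ S.ncard = n}

/-- The strong product `G ⊠ H` of two simple graphs: `(a,b)` adjacent to `(c,d)` iff
`a = c` and `bd ∈ E(H)`, or `b = d` and `ac ∈ E(G)`, or `ac ∈ E(G)` and `bd ∈ E(H)`. -/
def strongProd {α β : Type*} (G : SimpleGraph α) (H : SimpleGraph β) :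
    SimpleGraph (α × β) where
  Adj x y := (x.1 = y.1 ∧ H.Adj x.2 y.2) ∨ (x.2 = y.2 ∧ G.Adj x.1 y.1) ∨
    (G.Adj x.1 y.1 ∧ H.Adj x.2 y.2)
  symm := ⟨fun x y => by
    rintro (⟨h1, h2⟩ | ⟨h1, h2⟩ | ⟨h1, h2⟩)
    · exact Or.inl ⟨h1.symm, h2.symm⟩
    · exact Or.inr (Or.inl ⟨h1.symm, h2.symm⟩)
    · exact Or.inr (Or.inr ⟨h1.symm, h2.symm⟩)⟩
  loopless := ⟨fun x => by
    rintro (⟨_, h⟩ | ⟨_, h⟩ | ⟨h, _⟩)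
    · exact H.irrefl h
    · exact G.irrefl h
    · exact G.irrefl h⟩

infixl:70 " ⊠ " => strongProd

section Aux

variable {V W : Type*}

lemma strongProd_adj {G : SimpleGraph V} {H : SimpleGraph W} {x y : V × W} :
    (G ⊠ H).Adj x y ↔ (x.1 = y.1 ∧ H.Adj x.2 y.2) ∨ (x.2 = y.2 ∧ G.Adj x.1 y.1) ∨
      (G.Adj x.1 y.1 ∧ H.Adj x.2 y.2) := Iff.rfl

lemma isMEGSet_univ (G : SimpleGraph V) : IsMEGSet G Set.univ := by
  intro e he
  induction e using Sym2.ind with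
  | _ a b =>
    refine ⟨a, Set.mem_univ a, b, Set.mem_univ b, Or.inr ?_⟩
    rw [SimpleGraph.mem_edgeSet] at he
    rw [SimpleGraph.dist_eq_one_iff_adj.mpr he]
    intro h1
    have h2 : (G.deleteEdges {s(a, b)}).Adj a b := SimpleGraph.dist_eq_one_iff_adj.mp h1
    rw [SimpleGraph.deleteEdges_adj] at h2
    exact h2.2 rfl

lemma meg_le_card [Fintype V] (G : SimpleGraph V) : meg G ≤ Fintype.card V :=
  Nat.sInf_le ⟨Set.univ, isMEGSet_univ G, by
    rw [Set.ncard_univ, Nat.card_eq_fintype_card]⟩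

lemma meg_eq_card_of_all_univ [Fintype V] {G : SimpleGraph V}
    (h : ∀ S : Set V, IsMEGSet G S → S = Set.univ) : meg G = Fintype.card V := by
  refine le_antisymm (meg_le_card G) (le_csInf ?_ ?_)
  · exact ⟨Fintype.card V, Set.univ, isMEGSet_univ G, by
      rw [Set.ncard_univ, Nat.card_eq_fintype_card]⟩
  · rintro n ⟨S, hS, rfl⟩
    rw [h S hS, Set.ncard_univ, Nat.card_eq_fintype_card]

lemma not_isMEGSet_compl_singleton [Fintype V] {G : SimpleGraph V}
    (hmeg : meg G = Fintype.card V) (hV : 0 < Fintype.card V) (v : V) :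
    ¬ IsMEGSet G (Set.univ \ {v}) := by
  intro h
  have hle : meg G ≤ (Set.univ \ {v}).ncard := Nat.sInf_le ⟨_, h, rfl⟩
  have hcard : (Set.univ \ {v}).ncard = Fintype.card V - 1 := by
    rw [Set.ncard_diff_singleton_of_mem (Set.mem_univ v), Set.ncard_univ,
      Nat.card_eq_fintype_card]
  omega

section Products

variable {G : SimpleGraph V} {H : SimpleGraph W} {a b : V} {w : W}

/-! ### Walks in the box product minus an edge -/

lemma boxD_walk_H (hab : G.Adj a b) (x : V) {u u' : W} (q : H.Walk u u') :
    ∃ Wk : ((G □ H).deleteEdges {s((a, w), (b, w))}).Walk (x, u) (x, u'),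
      Wk.length = q.length := by
  induction q with
  | nil => exact ⟨.nil, rfl⟩
  | @cons u0 u1 u2 h' q' ih =>
    obtain ⟨Wk, hWk⟩ := ih
    have hadj : ((G □ H).deleteEdges {s((a, w), (b, w))}).Adj (x, u0) (x, u1) := by
      rw [SimpleGraph.deleteEdges_adj]
      refine ⟨SimpleGraph.boxProd_adj.mpr (Or.inr ⟨h', rfl⟩), ?_⟩
      intro hc
      rw [Set.mem_singleton_iff, Sym2.eq_iff] at hc
      rcases hc with ⟨h1, h2⟩ | ⟨h1, h2⟩
      · exact G.ne_of_adj hab ((congrArg Prod.fst h1).symm.trans (congrArg Prod.fst h2))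
      · exact G.ne_of_adj hab ((congrArg Prod.fst h2).symm.trans (congrArg Prod.fst h1))
    exact ⟨.cons hadj Wk, by simp [hWk]⟩

lemma boxD_walk_G {c : W} (hc : c ≠ w) {x y : V} (p : G.Walk x y) :
    ∃ Wk : ((G □ H).deleteEdges {s((a, w), (b, w))}).Walk (x, c) (y, c),
      Wk.length = p.length := by
  induction p with
  | nil => exact ⟨.nil, rfl⟩
  | @cons x0 x1 x2 h p' ih =>
    obtain ⟨Wk, hWk⟩ := ih
    have hadj : ((G □ H).deleteEdges {s((a, w), (b, w))}).Adj (x0, c) (x1, c) := by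
      rw [SimpleGraph.deleteEdges_adj]
      refine ⟨SimpleGraph.boxProd_adj.mpr (Or.inl ⟨h, rfl⟩), ?_⟩
      intro hcon
      rw [Set.mem_singleton_iff, Sym2.eq_iff] at hcon
      rcases hcon with ⟨h1, _⟩ | ⟨h1, _⟩ <;> exact hc (congrArg Prod.snd h1)
    exact ⟨.cons hadj Wk, by simp [hWk]⟩

lemma boxD_walk_Gdel (c : W) {x y : V}
    (p : (G.deleteEdges {s(a, b)}).Walk x y) :
    ∃ Wk : ((G □ H).deleteEdges {s((a, w), (b, w))}).Walk (x, c) (y, c),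
      Wk.length = p.length := by
  induction p with
  | nil => exact ⟨.nil, rfl⟩
  | @cons x0 x1 x2 h p' ih =>
    obtain ⟨Wk, hWk⟩ := ih
    obtain ⟨hadj0, hne⟩ := (SimpleGraph.deleteEdges_adj).mp h
    have hadj : ((G □ H).deleteEdges {s((a, w), (b, w))}).Adj (x0, c) (x1, c) := by
      rw [SimpleGraph.deleteEdges_adj]
      refine ⟨SimpleGraph.boxProd_adj.mpr (Or.inl ⟨hadj0, rfl⟩), ?_⟩
      intro hcon
      rw [Set.mem_singleton_iff, Sym2.eq_iff] at hcon
      apply hne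
      rw [Set.mem_singleton_iff, Sym2.eq_iff]
      rcases hcon with ⟨h1, h2⟩ | ⟨h1, h2⟩
      · exact Or.inl ⟨congrArg Prod.fst h1, congrArg Prod.fst h2⟩
      · exact Or.inr ⟨congrArg Prod.fst h1, congrArg Prod.fst h2⟩
    exact ⟨.cons hadj Wk, by simp [hWk]⟩

lemma box_dist_le (hG : G.Connected) (hH : H.Connected) :
    ∀ {r s : V × W} (Wk : (G □ H).Walk r s),
      G.dist r.1 s.1 + H.dist r.2 s.2 ≤ Wk.length := by
  intro r s Wk
  induction Wk with
  | nil => simp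
  | @cons r r₁ s h Wk ih =>
    rw [SimpleGraph.Walk.length_cons]
    rcases SimpleGraph.boxProd_adj.mp h with ⟨hg, he⟩ | ⟨hh, he⟩
    · have t1 : G.dist r.1 s.1 ≤ G.dist r.1 r₁.1 + G.dist r₁.1 s.1 := hG.dist_triangle
      have t2 : G.dist r.1 r₁.1 = 1 := SimpleGraph.dist_eq_one_iff_adj.mpr hg
      have t3 : H.dist r.2 s.2 = H.dist r₁.2 s.2 := by rw [he]
      omega
    · have t1 : H.dist r.2 s.2 ≤ H.dist r.2 r₁.2 + H.dist r₁.2 s.2 := hH.dist_triangle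
      have t2 : H.dist r.2 r₁.2 = 1 := SimpleGraph.dist_eq_one_iff_adj.mpr hh
      have t3 : G.dist r.1 s.1 = G.dist r₁.1 s.1 := by rw [he]
      omega

lemma box_key (hG : G.Connected) (hH : H.Connected) (hab : G.Adj a b) {v : V}
    (hdel : ∀ x, x ≠ v → ∀ y, y ≠ v →
      (G.deleteEdges {s(a, b)}).Reachable x y ∧
        (G.deleteEdges {s(a, b)}).dist x y = G.dist x y)
    {p q : V × W} (hp : p ≠ (v, w)) (hq : q ≠ (v, w)) :
    ((G □ H).deleteEdges {s((a, w), (b, w))}).Reachable p q ∧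
    ((G □ H).deleteEdges {s((a, w), (b, w))}).dist p q = (G □ H).dist p q := by
  obtain ⟨x, u⟩ := p; obtain ⟨y, u'⟩ := q
  have hWk : ∃ Wk : ((G □ H).deleteEdges {s((a, w), (b, w))}).Walk (x, u) (y, u'),
      Wk.length = G.dist x y + H.dist u u' := by
    by_cases hu : u = w
    · by_cases hu' : u' = w
      · have hx : x ≠ v := by rintro rfl; exact hp (by rw [hu])
        have hy : y ≠ v := by rintro rfl; exact hq (by rw [hu'])
        rw [hu, hu']
        obtain ⟨hr, hd⟩ := hdel x hx y hy
        obtain ⟨p0, hp0⟩ := hr.exists_walk_length_eq_dist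
        obtain ⟨Wk, hWkl⟩ := boxD_walk_Gdel (H := H) w p0
        refine ⟨Wk, ?_⟩
        rw [hWkl, hp0, hd, SimpleGraph.dist_self]
        omega
      · rw [hu]
        obtain ⟨q0, hq0⟩ := hH.exists_walk_length_eq_dist w u'
        obtain ⟨W1, h1⟩ := boxD_walk_H (w := w) hab x q0
        obtain ⟨p0, hp0⟩ := hG.exists_walk_length_eq_dist x y
        obtain ⟨W2, h2⟩ := boxD_walk_G hu' p0
        refine ⟨W1.append W2, ?_⟩
        rw [SimpleGraph.Walk.length_append, h1, h2, hp0, hq0]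
        omega
    · obtain ⟨p0, hp0⟩ := hG.exists_walk_length_eq_dist x y
      obtain ⟨W1, h1⟩ := boxD_walk_G hu p0
      obtain ⟨q0, hq0⟩ := hH.exists_walk_length_eq_dist u u'
      obtain ⟨W2, h2⟩ := boxD_walk_H hab y q0
      refine ⟨W1.append W2, ?_⟩
      rw [SimpleGraph.Walk.length_append, h1, h2, hp0, hq0]
  obtain ⟨Wk, hlen⟩ := hWk
  refine ⟨⟨Wk⟩, le_antisymm ?_ ?_⟩
  · have h1 : ((G □ H).deleteEdges {s((a, w), (b, w))}).dist (x, u) (y, u') ≤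
        G.dist x y + H.dist u u' := hlen ▸ SimpleGraph.dist_le Wk
    have hconn : (G □ H).Connected := hG.boxProd hH
    obtain ⟨P0, hP0⟩ := hconn.exists_walk_length_eq_dist (x, u) (y, u')
    have h2 := box_dist_le hG hH P0
    dsimp only at h2
    rw [hP0] at h2
    omega
  · exact SimpleGraph.Reachable.dist_anti (SimpleGraph.deleteEdges_le _) ⟨Wk⟩

/-! ### Walks in the strong product minus an edge -/

lemma strongD_walk_H (hab : G.Adj a b) (x : V) {u u' : W} (q : H.Walk u u') :
    ∃ Wk : ((G ⊠ H).deleteEdges {s((a, w), (b, w))}).Walk (x, u) (x, u'),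
      Wk.length = q.length := by
  induction q with
  | nil => exact ⟨.nil, rfl⟩
  | @cons u0 u1 u2 h' q' ih =>
    obtain ⟨Wk, hWk⟩ := ih
    have hadj : ((G ⊠ H).deleteEdges {s((a, w), (b, w))}).Adj (x, u0) (x, u1) := by
      rw [SimpleGraph.deleteEdges_adj]
      refine ⟨strongProd_adj.mpr (Or.inl ⟨rfl, h'⟩), ?_⟩
      intro hc
      rw [Set.mem_singleton_iff, Sym2.eq_iff] at hc
      rcases hc with ⟨h1, h2⟩ | ⟨h1, h2⟩
      · exact G.ne_of_adj hab ((congrArg Prod.fst h1).symm.trans (congrArg Prod.fst h2))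
      · exact G.ne_of_adj hab ((congrArg Prod.fst h2).symm.trans (congrArg Prod.fst h1))
    exact ⟨.cons hadj Wk, by simp [hWk]⟩

lemma strongD_walk_G {c : W} (hc : c ≠ w) {x y : V} (p : G.Walk x y) :
    ∃ Wk : ((G ⊠ H).deleteEdges {s((a, w), (b, w))}).Walk (x, c) (y, c),
      Wk.length = p.length := by
  induction p with
  | nil => exact ⟨.nil, rfl⟩
  | @cons x0 x1 x2 h p' ih =>
    obtain ⟨Wk, hWk⟩ := ih
    have hadj : ((G ⊠ H).deleteEdges {s((a, w), (b, w))}).Adj (x0, c) (x1, c) := by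
      rw [SimpleGraph.deleteEdges_adj]
      refine ⟨strongProd_adj.mpr (Or.inr (Or.inl ⟨rfl, h⟩)), ?_⟩
      intro hcon
      rw [Set.mem_singleton_iff, Sym2.eq_iff] at hcon
      rcases hcon with ⟨h1, _⟩ | ⟨h1, _⟩ <;> exact hc (congrArg Prod.snd h1)
    exact ⟨.cons hadj Wk, by simp [hWk]⟩

lemma strongD_walk_Gdel (c : W) {x y : V}
    (p : (G.deleteEdges {s(a, b)}).Walk x y) :
    ∃ Wk : ((G ⊠ H).deleteEdges {s((a, w), (b, w))}).Walk (x, c) (y, c),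
      Wk.length = p.length := by
  induction p with
  | nil => exact ⟨.nil, rfl⟩
  | @cons x0 x1 x2 h p' ih =>
    obtain ⟨Wk, hWk⟩ := ih
    obtain ⟨hadj0, hne⟩ := (SimpleGraph.deleteEdges_adj).mp h
    have hadj : ((G ⊠ H).deleteEdges {s((a, w), (b, w))}).Adj (x0, c) (x1, c) := by
      rw [SimpleGraph.deleteEdges_adj]
      refine ⟨strongProd_adj.mpr (Or.inr (Or.inl ⟨rfl, hadj0⟩)), ?_⟩
      intro hcon
      rw [Set.mem_singleton_iff, Sym2.eq_iff] at hcon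
      apply hne
      rw [Set.mem_singleton_iff, Sym2.eq_iff]
      rcases hcon with ⟨h1, h2⟩ | ⟨h1, h2⟩
      · exact Or.inl ⟨congrArg Prod.fst h1, congrArg Prod.fst h2⟩
      · exact Or.inr ⟨congrArg Prod.fst h1, congrArg Prod.fst h2⟩
    exact ⟨.cons hadj Wk, by simp [hWk]⟩

lemma strongD_walk_diag (hab : G.Adj a b) {u' : W} (hu' : u' ≠ w) :
    ∀ {x y : V} (p : G.Walk x y) {u : W} (q : H.Walk u u'),
    ∃ Wk : ((G ⊠ H).deleteEdges {s((a, w), (b, w))}).Walk (x, u) (y, u'),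
      Wk.length = max p.length q.length := by
  intro x y p
  induction p with
  | nil =>
    intro u q
    obtain ⟨Wk, hWk⟩ := strongD_walk_H (w := w) hab _ q
    exact ⟨Wk, by rw [hWk, SimpleGraph.Walk.length_nil]; omega⟩
  | @cons x x₁ y h p' ih =>
    intro u q
    cases q with
    | nil =>
      obtain ⟨Wk, hWk⟩ := strongD_walk_G hu' (SimpleGraph.Walk.cons h p')
      exact ⟨Wk, by rw [hWk, SimpleGraph.Walk.length_nil]; omega⟩
    | @cons u u₁ u'' h' q' =>
      obtain ⟨Wk, hWk⟩ := ih q'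
      refine ⟨.cons ?_ Wk, ?_⟩
      · rw [SimpleGraph.deleteEdges_adj]
        refine ⟨strongProd_adj.mpr (Or.inr (Or.inr ⟨h, h'⟩)), ?_⟩
        intro hc
        rw [Set.mem_singleton_iff, Sym2.eq_iff] at hc
        rcases hc with ⟨h1, h2⟩ | ⟨h1, h2⟩ <;>
          exact H.ne_of_adj h' ((congrArg Prod.snd h1).trans (congrArg Prod.snd h2).symm)
      · rw [SimpleGraph.Walk.length_cons, hWk, SimpleGraph.Walk.length_cons,
          SimpleGraph.Walk.length_cons]
        omega

lemma strong_dist_le (hG : G.Connected) (hH : H.Connected) :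
    ∀ {r s : V × W} (Wk : (G ⊠ H).Walk r s),
      G.dist r.1 s.1 ≤ Wk.length ∧ H.dist r.2 s.2 ≤ Wk.length := by
  intro r s Wk
  induction Wk with
  | nil => simp
  | @cons r r₁ s h Wk ih =>
    rw [SimpleGraph.Walk.length_cons]
    have hGstep : G.dist r.1 s.1 ≤ G.dist r₁.1 s.1 + 1 := by
      rcases strongProd_adj.mp h with ⟨he, _⟩ | ⟨_, hg⟩ | ⟨hg, _⟩
      · rw [he]; omega
      · have t1 : G.dist r.1 s.1 ≤ G.dist r.1 r₁.1 + G.dist r₁.1 s.1 := hG.dist_triangle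
        have t2 : G.dist r.1 r₁.1 = 1 := SimpleGraph.dist_eq_one_iff_adj.mpr hg
        omega
      · have t1 : G.dist r.1 s.1 ≤ G.dist r.1 r₁.1 + G.dist r₁.1 s.1 := hG.dist_triangle
        have t2 : G.dist r.1 r₁.1 = 1 := SimpleGraph.dist_eq_one_iff_adj.mpr hg
        omega
    have hHstep : H.dist r.2 s.2 ≤ H.dist r₁.2 s.2 + 1 := by
      rcases strongProd_adj.mp h with ⟨_, hh⟩ | ⟨he, _⟩ | ⟨_, hh⟩
      · have t1 : H.dist r.2 s.2 ≤ H.dist r.2 r₁.2 + H.dist r₁.2 s.2 := hH.dist_triangle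
        have t2 : H.dist r.2 r₁.2 = 1 := SimpleGraph.dist_eq_one_iff_adj.mpr hh
        omega
      · rw [he]; omega
      · have t1 : H.dist r.2 s.2 ≤ H.dist r.2 r₁.2 + H.dist r₁.2 s.2 := hH.dist_triangle
        have t2 : H.dist r.2 r₁.2 = 1 := SimpleGraph.dist_eq_one_iff_adj.mpr hh
        omega
    obtain ⟨ih1, ih2⟩ := ih
    exact ⟨by omega, by omega⟩

lemma boxProd_le_strongProd : (G □ H) ≤ G ⊠ H := by
  intro x y h
  rcases SimpleGraph.boxProd_adj.mp h with ⟨hg, he⟩ | ⟨hh, he⟩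
  · exact strongProd_adj.mpr (Or.inr (Or.inl ⟨he, hg⟩))
  · exact strongProd_adj.mpr (Or.inl ⟨he, hh⟩)

lemma strong_key (hG : G.Connected) (hH : H.Connected) (hab : G.Adj a b) {v : V}
    (hdel : ∀ x, x ≠ v → ∀ y, y ≠ v →
      (G.deleteEdges {s(a, b)}).Reachable x y ∧
        (G.deleteEdges {s(a, b)}).dist x y = G.dist x y)
    {p q : V × W} (hp : p ≠ (v, w)) (hq : q ≠ (v, w)) :
    ((G ⊠ H).deleteEdges {s((a, w), (b, w))}).Reachable p q ∧
    ((G ⊠ H).deleteEdges {s((a, w), (b, w))}).dist p q = (G ⊠ H).dist p q := by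
  obtain ⟨x, u⟩ := p; obtain ⟨y, u'⟩ := q
  have hWk : ∃ Wk : ((G ⊠ H).deleteEdges {s((a, w), (b, w))}).Walk (x, u) (y, u'),
      Wk.length = max (G.dist x y) (H.dist u u') := by
    by_cases hu' : u' = w
    · by_cases hu : u = w
      · have hx : x ≠ v := by rintro rfl; exact hp (by rw [hu])
        have hy : y ≠ v := by rintro rfl; exact hq (by rw [hu'])
        rw [hu, hu']
        obtain ⟨hr, hd⟩ := hdel x hx y hy
        obtain ⟨p0, hp0⟩ := hr.exists_walk_length_eq_dist
        obtain ⟨Wk, hWkl⟩ := strongD_walk_Gdel (H := H) w p0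
        refine ⟨Wk, ?_⟩
        rw [hWkl, hp0, hd, SimpleGraph.dist_self]
        omega
      · rw [hu']
        obtain ⟨p0, hp0⟩ := hG.exists_walk_length_eq_dist y x
        obtain ⟨q0, hq0⟩ := hH.exists_walk_length_eq_dist w u
        obtain ⟨Wk, hWkl⟩ := strongD_walk_diag hab hu p0 q0
        refine ⟨Wk.reverse, ?_⟩
        rw [SimpleGraph.Walk.length_reverse, hWkl, hp0, hq0,
          SimpleGraph.dist_comm (G := G), SimpleGraph.dist_comm (G := H)]
    · obtain ⟨p0, hp0⟩ := hG.exists_walk_length_eq_dist x y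
      obtain ⟨q0, hq0⟩ := hH.exists_walk_length_eq_dist u u'
      obtain ⟨Wk, hWkl⟩ := strongD_walk_diag hab hu' p0 q0
      refine ⟨Wk, ?_⟩
      rw [hWkl, hp0, hq0]
  obtain ⟨Wk, hlen⟩ := hWk
  refine ⟨⟨Wk⟩, le_antisymm ?_
    (SimpleGraph.Reachable.dist_anti (SimpleGraph.deleteEdges_le _) ⟨Wk⟩)⟩
  have h1 : ((G ⊠ H).deleteEdges {s((a, w), (b, w))}).dist (x, u) (y, u') ≤
      max (G.dist x y) (H.dist u u') := hlen ▸ SimpleGraph.dist_le Wk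
  have hconn : (G ⊠ H).Connected := by
    rw [SimpleGraph.connected_iff]
    exact ⟨((hG.boxProd hH).preconnected).mono boxProd_le_strongProd,
      (hG.boxProd hH).nonempty⟩
  obtain ⟨P0, hP0⟩ := hconn.exists_walk_length_eq_dist (x, u) (y, u')
  obtain ⟨hg2, hh2⟩ := strong_dist_le hG hH P0
  dsimp only at hg2 hh2
  rw [hP0] at hg2 hh2
  omega

end Products

end Aux

theorem meg_prod_of_meg_eq_card {V W : Type*} [Fintype V] [Fintype W]
    (G : SimpleGraph V) (H : SimpleGraph W)
    (hG : G.Connected) (hH : H.Connected)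
    (hV : 1 < Fintype.card V) (hW : 1 < Fintype.card W)
    (hmeg : meg G = Fintype.card V) :
    meg (G □ H) = Fintype.card V * Fintype.card W ∧
    meg (G ⊠ H) = Fintype.card V * Fintype.card W ∧
    (∀ S : Set (V × W), IsMEGSet (G □ H) S → S = Set.univ) ∧
    (∀ S : Set (V × W), IsMEGSet (G ⊠ H) S → S = Set.univ) := by
  have hVpos : 0 < Fintype.card V := by omega
  have hedge : ∀ v : V, ∃ a b : V, G.Adj a b ∧
      ∀ x, x ≠ v → ∀ y, y ≠ v →
        (G.deleteEdges {s(a, b)}).Reachable x y ∧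
          (G.deleteEdges {s(a, b)}).dist x y = G.dist x y := by
    intro v
    have hnot := not_isMEGSet_compl_singleton hmeg hVpos v
    rw [IsMEGSet] at hnot
    push_neg at hnot
    obtain ⟨e, he, hmon⟩ := hnot
    revert he hmon
    induction e using Sym2.ind with
    | _ a b =>
      intro he hmon
      refine ⟨a, b, (SimpleGraph.mem_edgeSet _).mp he, ?_⟩
      intro x hx y hy
      exact hmon x (by simp [hx]) y (by simp [hy])
  have hbox : ∀ S : Set (V × W), IsMEGSet (G □ H) S → S = Set.univ := by
    intro S hS
    by_contra hne
    obtain ⟨⟨v, w⟩, hvw⟩ : ∃ p : V × W, p ∉ S := by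
      by_contra h; push_neg at h; exact hne (Set.eq_univ_of_forall h)
    obtain ⟨a, b, hab, hdel⟩ := hedge v
    have heedge : s((a, w), (b, w)) ∈ (G □ H).edgeSet :=
      (SimpleGraph.mem_edgeSet _).mpr (SimpleGraph.boxProd_adj.mpr (Or.inl ⟨hab, rfl⟩))
    obtain ⟨x, hx, y, hy, hbad⟩ := hS _ heedge
    have hxne : x ≠ (v, w) := fun h => hvw (h ▸ hx)
    have hyne : y ≠ (v, w) := fun h => hvw (h ▸ hy)
    obtain ⟨hr, hd⟩ := box_key hG hH hab hdel hxne hyne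
    rcases hbad with h | h
    · exact h hr
    · exact h hd
  have hstrong : ∀ S : Set (V × W), IsMEGSet (G ⊠ H) S → S = Set.univ := by
    intro S hS
    by_contra hne
    obtain ⟨⟨v, w⟩, hvw⟩ : ∃ p : V × W, p ∉ S := by
      by_contra h; push_neg at h; exact hne (Set.eq_univ_of_forall h)
    obtain ⟨a, b, hab, hdel⟩ := hedge v
    have heedge : s((a, w), (b, w)) ∈ (G ⊠ H).edgeSet :=
      (SimpleGraph.mem_edgeSet _).mpr (strongProd_adj.mpr (Or.inr (Or.inl ⟨rfl, hab⟩)))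
    obtain ⟨x, hx, y, hy, hbad⟩ := hS _ heedge
    have hxne : x ≠ (v, w) := fun h => hvw (h ▸ hx)
    have hyne : y ≠ (v, w) := fun h => hvw (h ▸ hy)
    obtain ⟨hr, hd⟩ := strong_key hG hH hab hdel hxne hyne
    rcases hbad with h | h
    · exact h hr
    · exact h hd
  refine ⟨?_, ?_, hbox, hstrong⟩
  · exact (meg_eq_card_of_all_univ hbox).trans (Fintype.card_prod V W)
  · exact (meg_eq_card_of_all_univ hstrong).trans (Fintype.card_prod V W)
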